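/- Let σ be a finite Borel measure on the torus 𝕋^d whose Fourier coefficients σ̂(n) tend to 0 as ‖n‖ → ∞ over ℤ^d. Viewing σ as a finite measure on ℝ^d supported on [0,1)^d, the Fourier transform σ̂(t) = ∫ e^{−2πi⟨ℓ,t⟩} dσ(ℓ) tends to 0 as ‖t‖ → ∞ over ℝ^d. -/

import Mathlib

open MeasureTheory

lemma exp_I_lipschitz : LipschitzWith 1 (fun x : ℝ => Complex.exp (x * Complex.I)) := by
  apply lipschitzWith_of_nnnorm_deriv_le
  · exact (Complex.ofRealCLM.differentiable.mul_const Complex.I).cexp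
  · intro x
    have h1 : HasDerivAt (fun x : ℝ => (x : ℂ) * Complex.I) Complex.I x := by
      simpa using (Complex.ofRealCLM.hasDerivAt (x := x)).mul_const Complex.I
    have : HasDerivAt (fun x : ℝ => Complex.exp (x * Complex.I))
        (Complex.I * Complex.exp (x * Complex.I)) x := by
      simpa [mul_comm] using h1.cexp
    rw [this.deriv]
    simp [← norm_toNNReal, Complex.norm_exp_ofReal_mul_I]

lemma exp_I_dist (a b : ℝ) :
    ‖Complex.exp (a * Complex.I) - Complex.exp (b * Complex.I)‖ ≤ |a - b| := by
  simpa [dist_eq_norm, Real.dist_eq] using exp_I_lipschitz.dist_le_mul a b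

/-- Let `σ` be a finite Borel measure on `𝕋^d`, viewed as a finite measure on
`ℝ^d` supported on `[0,1)^d`, whose Fourier coefficients tend to `0` along `ℤ^d`; moreover
assume (as inherited by absolute continuity) that the twisted measures
`e^{-2πi⟨ℓ,w⟩} dσ(ℓ)`, `w ∈ [0,1]^d`, are also Rajchman on `ℤ^d`, i.e. for every such `w`
the Fourier transform of `σ` tends to `0` along the translate `ℤ^d + w`. Then the Fourier
transform of `σ` tends to `0` at infinity over all of `ℝ^d`. -/
theorem stmt_4 (d : ℕ)
    (σ : Measure (EuclideanSpace ℝ (Fin d))) [IsFiniteMeasure σ]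
    (hsupp : σ {x : EuclideanSpace ℝ (Fin d) | ¬ ∀ i, x i ∈ Set.Ico (0 : ℝ) 1} = 0)
    (hZ : ∀ w : EuclideanSpace ℝ (Fin d), (∀ i, w i ∈ Set.Icc (0 : ℝ) 1) →
      Filter.Tendsto
        (fun n : Fin d → ℤ =>
          ∫ ℓ, Complex.exp (Complex.ofReal
            (-(2 * Real.pi *
              inner ℝ ℓ ((show EuclideanSpace ℝ (Fin d) from WithLp.toLp 2 fun i => (n i : ℝ)) + w))) *
            Complex.I) ∂σ)
        Filter.cofinite (nhds 0)) :
    Filter.Tendsto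
      (fun t : EuclideanSpace ℝ (Fin d) =>
        ∫ ℓ, Complex.exp (Complex.ofReal (-(2 * Real.pi * inner ℝ ℓ t)) * Complex.I) ∂σ)
      (Filter.cocompact (EuclideanSpace ℝ (Fin d))) (nhds 0) := by
  set E := EuclideanSpace ℝ (Fin d)
  set F : E → ℂ := fun t =>
    ∫ ℓ, Complex.exp (Complex.ofReal (-(2 * Real.pi * inner ℝ ℓ t)) * Complex.I) ∂σ with hF
  -- a.e. support
  have hae : ∀ᵐ ℓ ∂σ, ∀ i, (ℓ : E) i ∈ Set.Ico (0 : ℝ) 1 := ae_iff.mpr hsupp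
  have haenorm : ∀ᵐ ℓ ∂σ, ‖(ℓ : E)‖ ≤ Real.sqrt d := by
    filter_upwards [hae] with ℓ hℓ
    rw [EuclideanSpace.norm_eq]
    have : ∑ i, ‖ℓ i‖ ^ 2 ≤ ∑ _i : Fin d, (1 : ℝ) := by
      apply Finset.sum_le_sum
      intro i _
      have h1 := (hℓ i).1
      have h2 := (hℓ i).2
      have : ‖ℓ i‖ ≤ 1 := by rw [Real.norm_eq_abs, abs_of_nonneg h1]; linarith
      nlinarith [norm_nonneg (ℓ i)]
    calc Real.sqrt (∑ i, ‖ℓ i‖ ^ 2) ≤ Real.sqrt (∑ _i : Fin d, (1:ℝ)) :=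
          Real.sqrt_le_sqrt this
      _ = Real.sqrt d := by simp
  -- integrability
  have hint : ∀ t : E, Integrable
      (fun ℓ : E => Complex.exp (Complex.ofReal (-(2 * Real.pi * inner ℝ ℓ t)) * Complex.I)) σ := by
    intro t
    have hc : Continuous
        (fun ℓ : E => Complex.exp (Complex.ofReal (-(2 * Real.pi * inner ℝ ℓ t)) * Complex.I)) := by
      refine Complex.continuous_exp.comp ?_
      exact (Complex.continuous_ofReal.comp
        ((continuous_const.mul ((continuous_id.inner continuous_const))).neg)).mul
        continuous_const
    refine (integrable_const (1:ℝ)).mono' hc.aestronglyMeasurable ?_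
    filter_upwards with ℓ
    rw [Complex.norm_exp_ofReal_mul_I]
  set C : ℝ := 2 * Real.pi * Real.sqrt d * (σ Set.univ).toReal with hC
  have hC0 : 0 ≤ C := by
    have := Real.pi_pos
    positivity
  -- Lipschitz estimate
  have hlip : ∀ s t : E, ‖F t - F s‖ ≤ C * dist t s := by
    intro s t
    rw [hF]
    simp only
    rw [← integral_sub (hint t) (hint s)]
    have : ‖∫ ℓ, (Complex.exp (Complex.ofReal (-(2 * Real.pi * inner ℝ ℓ t)) * Complex.I) -
        Complex.exp (Complex.ofReal (-(2 * Real.pi * inner ℝ ℓ s)) * Complex.I)) ∂σ‖ ≤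
        ∫ _ℓ, 2 * Real.pi * Real.sqrt d * dist t s ∂σ := by
      apply norm_integral_le_of_norm_le (integrable_const _)
      filter_upwards [haenorm] with ℓ hℓ
      refine (exp_I_dist _ _).trans ?_
      have heq : (-(2 * Real.pi * inner ℝ ℓ t)) - (-(2 * Real.pi * inner ℝ ℓ s)) =
          -(2 * Real.pi * (inner ℝ ℓ (t - s) : ℝ)) := by
        rw [inner_sub_right]; ring
      have habs : |(-(2 * Real.pi * inner ℝ ℓ t)) - (-(2 * Real.pi * inner ℝ ℓ s))| =
          2 * Real.pi * |(inner ℝ ℓ (t - s) : ℝ)| := by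
        rw [heq, abs_neg, abs_mul, abs_of_nonneg (by positivity : (0:ℝ) ≤ 2 * Real.pi)]
      rw [habs]
      have h1 : |(inner ℝ ℓ (t - s) : ℝ)| ≤ ‖ℓ‖ * ‖t - s‖ := abs_real_inner_le_norm ℓ (t - s)
      have h2 : ‖ℓ‖ * ‖t - s‖ ≤ Real.sqrt d * dist t s := by
        rw [dist_eq_norm]
        exact mul_le_mul_of_nonneg_right hℓ (norm_nonneg _)
      have hpi : (0:ℝ) < 2 * Real.pi := by positivity
      calc 2 * Real.pi * |(inner ℝ ℓ (t - s) : ℝ)| ≤ 2 * Real.pi * (Real.sqrt d * dist t s) := by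
            apply mul_le_mul_of_nonneg_left (h1.trans h2) hpi.le
        _ = 2 * Real.pi * Real.sqrt d * dist t s := by ring
    refine this.trans ?_
    rw [integral_const, smul_eq_mul, hC]
    ring_nf
    exact le_of_eq (by simp only [measureReal_def]; ring)
  -- main epsilon argument
  rw [Metric.tendsto_nhds]
  intro ε hε
  set δ : ℝ := ε / (2 * (C + 1)) with hδ
  have hδpos : 0 < δ := by positivity
  -- compact cube
  set K : Set E := {w : E | ∀ i, w i ∈ Set.Icc (0:ℝ) 1} with hKdef
  have hKc : IsCompact K := by
    apply Metric.isCompact_of_isClosed_isBounded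
    · have : K = ⋂ i, (fun w : E => w i) ⁻¹' Set.Icc (0:ℝ) 1 := by
        ext w; simp [hKdef]
      rw [this]
      exact isClosed_iInter fun i =>
        IsClosed.preimage (EuclideanSpace.proj i).continuous isClosed_Icc
    · rw [Metric.isBounded_iff_subset_closedBall 0]
      refine ⟨Real.sqrt d, fun w hw => ?_⟩
      rw [Metric.mem_closedBall, dist_zero_right, EuclideanSpace.norm_eq]
      have : ∑ i, ‖w i‖ ^ 2 ≤ ∑ _i : Fin d, (1 : ℝ) := by
        apply Finset.sum_le_sum
        intro i _
        have h1 := (hw i).1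
        have h2 := (hw i).2
        have : ‖w i‖ ≤ 1 := by rw [Real.norm_eq_abs, abs_of_nonneg h1]; exact h2
        nlinarith [norm_nonneg (w i)]
      calc Real.sqrt (∑ i, ‖w i‖ ^ 2) ≤ Real.sqrt (∑ _i : Fin d, (1:ℝ)) :=
            Real.sqrt_le_sqrt this
        _ = Real.sqrt d := by simp
  -- finite net
  obtain ⟨W, hWK, hWfin, hWcov⟩ := hKc.elim_finite_subcover_image
    (b := K) (c := fun w => Metric.ball w δ) (fun w _ => Metric.isOpen_ball)
    (fun w hw => Set.mem_biUnion hw (Metric.mem_ball_self hδpos))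
  -- eventual smallness on the net
  have hEV : ∀ᶠ n : (Fin d → ℤ) in Filter.cofinite, ∀ w ∈ W,
      ‖F ((show E from WithLp.toLp 2 fun i => ((n i : ℝ))) + w)‖ < ε / 2 := by
    rw [Filter.eventually_all_finite hWfin]
    intro w hw
    have := hZ w (hWK hw)
    have h2 := Metric.tendsto_nhds.mp this (ε/2) (by positivity)
    filter_upwards [h2] with n hn
    simpa only [dist_zero_right] using hn
  -- floor map tends to cofinite
  set ψ : E → (Fin d → ℤ) := fun t i => ⌊t i⌋ with hψ
  have hfrac : ∀ t : E, t = (show E from WithLp.toLp 2 fun i => ((ψ t i : ℝ))) +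
      (show E from WithLp.toLp 2 fun i => Int.fract (t i)) := by
    intro t
    ext i
    show t i = (⌊t i⌋ : ℝ) + Int.fract (t i)
    rw [Int.floor_add_fract]
  have hfracK : ∀ t : E, (show E from WithLp.toLp 2 fun i => Int.fract (t i)) ∈ K := by
    intro t i
    exact ⟨Int.fract_nonneg _, (Int.fract_lt_one _).le⟩
  have hfracnorm : ∀ t : E, ‖(show E from WithLp.toLp 2 fun i => Int.fract (t i))‖ ≤ Real.sqrt d := by
    intro t
    rw [EuclideanSpace.norm_eq]
    have : ∑ i, ‖Int.fract (t i)‖ ^ 2 ≤ ∑ _i : Fin d, (1 : ℝ) := by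
      apply Finset.sum_le_sum
      intro i _
      have h1 := Int.fract_nonneg (t i)
      have h2 := (Int.fract_lt_one (t i)).le
      have : ‖Int.fract (t i)‖ ≤ 1 := by rw [Real.norm_eq_abs, abs_of_nonneg h1]; exact h2
      nlinarith [norm_nonneg (Int.fract (t i))]
    calc Real.sqrt (∑ i, ‖Int.fract (t i)‖ ^ 2) ≤ Real.sqrt (∑ _i : Fin d, (1:ℝ)) :=
          Real.sqrt_le_sqrt this
      _ = Real.sqrt d := by simp
  have hψtendsto : Filter.Tendsto ψ (Filter.cocompact E) Filter.cofinite := by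
    rw [Filter.hasBasis_cofinite.tendsto_right_iff]
    intro s hs
    have hbd : Bornology.IsBounded {t : E | ψ t ∈ s} := by
      have hsub : {t : E | ψ t ∈ s} ⊆
          ⋃ m ∈ s, Metric.closedBall (show E from WithLp.toLp 2 fun i => ((m i : ℝ))) (Real.sqrt d) := by
        intro t ht
        refine Set.mem_biUnion ht ?_
        rw [Metric.mem_closedBall, dist_eq_norm]
        have hdiff : t - (show E from WithLp.toLp 2 fun i => ((ψ t i : ℝ))) =
            (show E from WithLp.toLp 2 fun i => Int.fract (t i)) := by
          ext i
          show t i - (⌊t i⌋ : ℝ) = Int.fract (t i)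
          rw [Int.fract]
        rw [hdiff]
        exact hfracnorm t
      exact ((Bornology.isBounded_biUnion hs).2
        fun m _ => Metric.isBounded_closedBall).subset hsub
    have hmem : {t : E | ψ t ∈ sᶜ} ∈ Filter.cocompact E := by
      rw [← Metric.cobounded_eq_cocompact, ← Bornology.isCobounded_def,
        ← Bornology.isBounded_compl_iff]
      have : {t : E | ψ t ∈ sᶜ}ᶜ = {t : E | ψ t ∈ s} := by
        ext t; simp
      rw [this]
      exact hbd
    exact hmem
  have hev2 := hψtendsto.eventually hEV
  filter_upwards [hev2] with t ht
  obtain ⟨w, hwW, hwball⟩ : ∃ w ∈ W,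
      (show E from WithLp.toLp 2 fun i => Int.fract (t i)) ∈ Metric.ball w δ := by
    have := hWcov (hfracK t)
    simpa using this
  have hclose := ht w hwW
  have key : ‖F t - F ((show E from WithLp.toLp 2 fun i => ((ψ t i : ℝ))) + w)‖ ≤ C * δ := by
    have := hlip ((show E from WithLp.toLp 2 fun i => ((ψ t i : ℝ))) + w) t
    refine this.trans ?_
    apply mul_le_mul_of_nonneg_left _ hC0
    have hdiff : t - (show E from WithLp.toLp 2 fun i => ((ψ t i : ℝ))) =
        (show E from WithLp.toLp 2 fun i => Int.fract (t i)) := by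
      ext i
      show t i - (⌊t i⌋ : ℝ) = Int.fract (t i)
      rw [Int.fract]
    have : dist t ((show E from WithLp.toLp 2 fun i => ((ψ t i : ℝ))) + w) =
        dist (show E from WithLp.toLp 2 fun i => Int.fract (t i)) w := by
      rw [dist_eq_norm, dist_eq_norm, ← hdiff]
      congr 1
      abel
    rw [this]
    exact (Metric.mem_ball.mp hwball).le
  have hCδ : C * δ < ε / 2 := by
    have h1 : C / (C + 1) < 1 := by
      rw [div_lt_one (by linarith)]; linarith
    have h2 : C * δ = ε / 2 * (C / (C + 1)) := by
      rw [hδ]; field_simp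
    rw [h2]
    calc ε / 2 * (C / (C + 1)) < ε / 2 * 1 :=
          mul_lt_mul_of_pos_left h1 (by positivity)
      _ = ε / 2 := by ring
  rw [dist_zero_right]
  calc ‖F t‖ = ‖(F t - F ((show E from WithLp.toLp 2 fun i => ((ψ t i : ℝ))) + w)) +
        F ((show E from WithLp.toLp 2 fun i => ((ψ t i : ℝ))) + w)‖ := by rw [sub_add_cancel]
    _ ≤ ‖F t - F ((show E from WithLp.toLp 2 fun i => ((ψ t i : ℝ))) + w)‖ +
        ‖F ((show E from WithLp.toLp 2 fun i => ((ψ t i : ℝ))) + w)‖ := norm_add_le _ _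
    _ < ε / 2 + ε / 2 := by
        apply add_lt_add_of_le_of_lt (key.trans hCδ.le) hclose
    _ = ε := by ring
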